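/- arXiv:1903.09238 — 2 statements merged into one kernel-verified Lean document; each statement's English description precedes it below -/
import Mathlib

section
/- The Setwise Levenshtein Distance SLD between multisets of strings is a metric: SLD(X,X)=0, SLD is symmetric, and SLD(X,Y)+SLD(Y,Z) ≥ SLD(X,Z) for all finite multisets of strings X, Y, Z. -/
set_option linter.unusedSectionVars false


/-- Cost structure for edit distances (formerly `Levenshtein.Cost` in Mathlib). -/
structure Levenshtein.Cost (α β δ : Type*) where
  delete : α → δ
  insert : β → δ
  substitute : α → β → δ

/-- The default cost: every operation costs `1`, substituting equal letters costs `0`. -/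
def Levenshtein.defaultCost {α : Type*} [DecidableEq α] : Levenshtein.Cost α α ℕ where
  delete _ := 1
  insert _ := 1
  substitute a b := if a = b then 0 else 1

/-- Levenshtein distance with cost `C` (formerly in Mathlib), given by its defining recursion. -/
def levenshtein {α β δ : Type*} [AddZeroClass δ] [Min δ] (C : Levenshtein.Cost α β δ) :
    List α → List β → δ
  | [], [] => 0
  | [], y :: ys => C.insert y + levenshtein C [] ys
  | x :: xs, [] => C.delete x + levenshtein C xs []
  | x :: xs, y :: ys => min (C.delete x + levenshtein C xs (y :: ys))
      (min (C.insert y + levenshtein C (x :: xs) ys) (C.substitute x y + levenshtein C xs ys))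

variable {α : Type*} [Fintype α] [DecidableEq α]

/-- Levenshtein distance: the minimum number of single-character insertions,
deletions, and substitutions transforming one string into another. -/
def LD (x y : List α) : ℕ := levenshtein Levenshtein.defaultCost x y

/-- Normalized Levenshtein distance. -/
noncomputable def NLD (x y : List α) : ℝ :=
  2 * LD x y / (x.length + y.length + LD x y)

/-- Aggregate length of the tokens of a tokenized string (multiset of strings). -/
def aggLen (X : Multiset (List α)) : ℕ := (X.map List.length).sum

/-- Pad a multiset of strings with empty strings up to size `k`. -/
def pad (X : Multiset (List α)) (k : ℕ) : Multiset (List α) :=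
  X + Multiset.replicate (k - Multiset.card X) []

/-- Setwise Levenshtein distance: pad both multisets with empty strings to size
`k = max(|X|,|Y|)`, then take the minimum over all bijections (i.e. over all
orderings of the two padded multisets as lists) of the sum of tokenwise
Levenshtein distances. -/
noncomputable def SLD (X Y : Multiset (List α)) : ℕ :=
  sInf { n | ∃ xs ys : List (List α),
    (↑xs : Multiset (List α)) = pad X (max (Multiset.card X) (Multiset.card Y)) ∧
    (↑ys : Multiset (List α)) = pad Y (max (Multiset.card X) (Multiset.card Y)) ∧
    n = (List.zipWith LD xs ys).sum }

/-- Normalized Setwise Levenshtein distance. -/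
noncomputable def NSLD (X Y : Multiset (List α)) : ℝ :=
  2 * SLD X Y / (aggLen X + aggLen Y + SLD X Y)

lemma LD_nil_left (y : List α) : LD [] y = y.length := by
  induction y with
  | nil => simp [LD, levenshtein]
  | cons c t ih => simp [LD, levenshtein, Levenshtein.defaultCost] at ih ⊢; omega
lemma LD_nil_right (x : List α) : LD x [] = x.length := by
  induction x with
  | nil => simp [LD, levenshtein]
  | cons c t ih => simp [LD, levenshtein, Levenshtein.defaultCost] at ih ⊢; omega
lemma LD_cons_cons (a : α) (x : List α) (c : α) (z : List α) :
    LD (a::x) (c::z) = min (1 + LD x (c::z))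
      (min (1 + LD (a::x) z) ((if a = c then 0 else 1) + LD x z)) := by
  simp [LD, levenshtein, Levenshtein.defaultCost]
lemma LD_del_le (a : α) (x z : List α) : LD (a::x) z ≤ 1 + LD x z := by
  cases z with
  | nil => simp [LD_nil_right]
  | cons c t => rw [LD_cons_cons]; omega
lemma LD_ins_le (x : List α) (c : α) (z : List α) : LD x (c::z) ≤ 1 + LD x z := by
  cases x with
  | nil => simp [LD_nil_left]
  | cons a t => rw [LD_cons_cons]; omega
lemma LD_sub_le (a : α) (x : List α) (c : α) (z : List α) :
    LD (a::x) (c::z) ≤ (if a = c then 0 else 1) + LD x z := by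
  rw [LD_cons_cons]; omega
lemma LD_self (x : List α) : LD x x = 0 := by
  induction x with
  | nil => simp [LD, levenshtein]
  | cons a t ih => have := LD_sub_le a t a t; simp [ih] at this; omega
lemma LD_comm (x y : List α) : LD x y = LD y x := by
  induction x generalizing y with
  | nil => simp [LD_nil_left, LD_nil_right]
  | cons a t ih =>
    induction y with
    | nil => simp [LD_nil_left, LD_nil_right]
    | cons c s ihy =>
      rw [LD_cons_cons, LD_cons_cons, ih (c::s), ih s, ihy]
      have : (if a = c then 0 else 1) = (if c = a then 0 else 1) := by
        by_cases h : a = c <;> simp [h, Ne.symm, eq_comm]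
      rw [this]; omega

lemma length_le_LD (y z : List α) : z.length ≤ y.length + LD y z := by
  induction y generalizing z with
  | nil => simp [LD_nil_left]
  | cons b y' ih =>
    induction z with
    | nil => simp
    | cons c z' ihy =>
      have A := ih (c::z')
      have B := ih z'
      rw [LD_cons_cons]
      simp only [List.length_cons] at *
      by_cases hbc : b = c <;> simp [hbc] at * <;> omega

lemma length_le_LD' (y z : List α) : y.length ≤ z.length + LD y z := by
  rw [LD_comm]; exact length_le_LD z y


lemma ite_triangle (a b c : α) : (if a = c then (0:ℕ) else 1) ≤
    (if a = b then 0 else 1) + (if b = c then 0 else 1) := by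
  by_cases h1 : a = b <;> by_cases h2 : b = c <;> split_ifs <;> simp_all

lemma LD_triangle (x y z : List α) : LD x z ≤ LD x y + LD y z := by
  match x, y, z with
  | [], y, z =>
    rw [LD_nil_left, LD_nil_left]; exact length_le_LD y z
  | a::x', y, [] =>
    rw [LD_nil_right, LD_nil_right]
    have := length_le_LD' (a::x') y
    omega
  | a::x', [], c::z' =>
    rw [LD_nil_right, LD_nil_left]
    have h1 := LD_del_le a x' (c::z')
    have h2 := LD_triangle x' [] (c::z')
    rw [LD_nil_right, LD_nil_left] at h2
    simp only [List.length_cons] at h2 ⊢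
    omega
  | a::x', b::y', c::z' =>
    have hd1 := LD_cons_cons a x' b y'
    have hd2 := LD_cons_cons b y' c z'
    have U1 := LD_del_le a x' (c::z')
    have U2 := LD_ins_le (a::x') c z'
    have U3 := LD_sub_le a x' c z'
    have I1 := LD_triangle x' (b::y') (c::z')
    have I2 := LD_triangle (a::x') (b::y') z'
    have I3 := LD_triangle (a::x') y' (c::z')
    have I4 := LD_triangle (a::x') y' z'
    have I5 := LD_triangle x' y' (c::z')
    have I6 := LD_triangle x' y' z'
    have hstri := ite_triangle a b c
    set s1 := (if a = b then (0:ℕ) else 1) with hs1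
    set s2 := (if b = c then (0:ℕ) else 1) with hs2
    set s3 := (if a = c then (0:ℕ) else 1) with hs3
    omega
termination_by x.length + y.length + z.length
decreasing_by all_goals simp <;> omega

def SLDset (k : ℕ) (X Y : Multiset (List α)) : Set ℕ :=
  { n | ∃ xs ys : List (List α),
    (↑xs : Multiset (List α)) = pad X k ∧
    (↑ys : Multiset (List α)) = pad Y k ∧
    n = (List.zipWith LD xs ys).sum }

noncomputable def Tk (k : ℕ) (X Y : Multiset (List α)) : ℕ := sInf (SLDset k X Y)

lemma SLD_eq_Tk (X Y : Multiset (List α)) :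
    SLD X Y = Tk (max (Multiset.card X) (Multiset.card Y)) X Y := rfl

lemma SLDset_nonempty (k : ℕ) (X Y : Multiset (List α)) : (SLDset k X Y).Nonempty :=
  ⟨_, (pad X k).toList, (pad Y k).toList, Multiset.coe_toList _, Multiset.coe_toList _, rfl⟩

lemma Tk_mem (k : ℕ) (X Y : Multiset (List α)) : Tk k X Y ∈ SLDset k X Y :=
  Nat.sInf_mem (SLDset_nonempty k X Y)

lemma Tk_le {k : ℕ} {X Y : Multiset (List α)} {n : ℕ} (h : n ∈ SLDset k X Y) :
    Tk k X Y ≤ n := Nat.sInf_le h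

lemma card_pad (X : Multiset (List α)) (k : ℕ) (h : Multiset.card X ≤ k) :
    Multiset.card (pad X k) = k := by simp [pad]; omega

lemma pad_succ (X : Multiset (List α)) (k : ℕ) (h : Multiset.card X ≤ k) :
    pad X (k+1) = [] ::ₘ pad X k := by
  unfold pad
  rw [show k + 1 - Multiset.card X = (k - Multiset.card X) + 1 by omega,
    Multiset.replicate_succ, Multiset.add_cons]

lemma zip_sum_eq (P : List (List α × List α)) :
    (List.zipWith LD (P.map Prod.fst) (P.map Prod.snd)).sum
      = (P.map fun p => LD p.1 p.2).sum := by
  induction P with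
  | nil => simp
  | cons p t ih => simp [ih]

lemma zipWith_sum_self (l : List (List α)) : (List.zipWith LD l l).sum = 0 := by
  induction l with
  | nil => simp
  | cons a t ih => simp [ih, LD_self]

lemma zip_triangle_sum :
    ∀ (xs ys zs : List (List α)), xs.length = ys.length → ys.length = zs.length →
    (List.zipWith LD xs zs).sum ≤ (List.zipWith LD xs ys).sum + (List.zipWith LD ys zs).sum := by
  intro xs
  induction xs with
  | nil => intros; simp
  | cons a xs ih =>
    intro ys zs hy hz
    cases ys with
    | nil => simp at hy
    | cons b ys =>
      cases zs with
      | nil => simp at hz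
      | cons c zs =>
        simp only [List.zipWith_cons_cons, List.sum_cons]
        have h1 := ih ys zs (by simpa using hy) (by simpa using hz)
        have h2 := LD_triangle a b c
        omega

lemma align {ys' ys : List (List α)} (h : ys'.Perm ys) :
    ∀ zs : List (List α), ys'.length = zs.length → ∃ zs', zs'.Perm zs ∧
      (List.zipWith LD ys zs').sum = (List.zipWith LD ys' zs).sum ∧
      zs'.length = zs.length := by
  induction h with
  | nil => intro zs _; exact ⟨zs, .refl _, rfl, rfl⟩
  | @cons a t' t h ih =>
    intro zs hlen
    cases zs with
    | nil => simp at hlen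
    | cons c zs =>
      obtain ⟨zs', hp, hs, hl⟩ := ih zs (by simpa using hlen)
      exact ⟨c :: zs', hp.cons c, by simp [hs], by simp [hl]⟩
  | swap a b l =>
    intro zs hlen
    cases zs with
    | nil => simp at hlen
    | cons c zs =>
      cases zs with
      | nil => simp at hlen
      | cons d t =>
        refine ⟨d :: c :: t, List.Perm.swap c d t, ?_, rfl⟩
        simp only [List.zipWith_cons_cons, List.sum_cons]
        omega
  | trans h1 h2 ih1 ih2 =>
    intro zs hlen
    obtain ⟨zs'', p2, s2, l2⟩ := ih1 zs hlen
    obtain ⟨zs', p1, s1, l1⟩ := ih2 zs''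
      ((h1.length_eq.symm.trans hlen).trans l2.symm)
    exact ⟨zs', p1.trans p2, s1.trans s2, l1.trans l2⟩

lemma reduce (P : List (List α × List α)) (S T : Multiset (List α))
    (hf : (↑(P.map Prod.fst) : Multiset (List α)) = [] ::ₘ S)
    (hs : (↑(P.map Prod.snd) : Multiset (List α)) = [] ::ₘ T) :
    ∃ P' : List (List α × List α),
      (↑(P'.map Prod.fst) : Multiset (List α)) = S ∧
      (↑(P'.map Prod.snd) : Multiset (List α)) = T ∧
      (P'.map fun p => LD p.1 p.2).sum ≤ (P.map fun p => LD p.1 p.2).sum := by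
  have h0 : ([] : List α) ∈ P.map Prod.fst := by
    have : ([] : List α) ∈ (↑(P.map Prod.fst) : Multiset (List α)) := by
      rw [hf]; exact Multiset.mem_cons_self _ _
    simpa using this
  obtain ⟨q, hqP, hq1⟩ := List.mem_map.mp h0
  obtain ⟨P₀, hperm⟩ : ∃ P₀, P.Perm (q :: P₀) := ⟨_, List.perm_cons_erase hqP⟩
  have hf0 : (↑((q :: P₀).map Prod.fst) : Multiset (List α)) = [] ::ₘ S := by
    rw [← hf]; exact Multiset.coe_eq_coe.mpr ((hperm.map _).symm)
  have hs0 : (↑((q :: P₀).map Prod.snd) : Multiset (List α)) = [] ::ₘ T := by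
    rw [← hs]; exact Multiset.coe_eq_coe.mpr ((hperm.map _).symm)
  simp only [List.map_cons, hq1, ← Multiset.cons_coe] at hf0 hs0
  have hSf : (↑(P₀.map Prod.fst) : Multiset (List α)) = S :=
    (Multiset.cons_inj_right _).mp hf0
  have hcost : (P.map fun p => LD p.1 p.2).sum
      = LD q.1 q.2 + (P₀.map fun p => LD p.1 p.2).sum := by
    have := (hperm.map (fun p => LD p.1 p.2)).sum_eq
    simpa using this
  by_cases hb : q.2 = []
  · refine ⟨P₀, hSf, ?_, by omega⟩
    rw [hb] at hs0
    exact (Multiset.cons_inj_right _).mp hs0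
  · have h1 : ([] : List α) ∈ P₀.map Prod.snd := by
      have hmem : ([] : List α) ∈ q.2 ::ₘ (↑(P₀.map Prod.snd) : Multiset (List α)) := by
        rw [hs0]; exact Multiset.mem_cons_self _ _
      rcases Multiset.mem_cons.mp hmem with h | h
      · exact absurd h.symm hb
      · simpa using h
    obtain ⟨r, hrP, hr2⟩ := List.mem_map.mp h1
    obtain ⟨P₁, hperm0⟩ : ∃ P₁, P₀.Perm (r :: P₁) := ⟨_, List.perm_cons_erase hrP⟩
    have hf1 : (↑(P₀.map Prod.fst) : Multiset (List α))
        = r.1 ::ₘ (↑(P₁.map Prod.fst) : Multiset (List α)) := by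
      have := Multiset.coe_eq_coe.mpr (hperm0.map Prod.fst)
      simpa [Multiset.cons_coe] using this
    have hs1 : (↑(P₀.map Prod.snd) : Multiset (List α))
        = [] ::ₘ (↑(P₁.map Prod.snd) : Multiset (List α)) := by
      have := Multiset.coe_eq_coe.mpr (hperm0.map Prod.snd)
      simpa [Multiset.cons_coe, hr2] using this
    refine ⟨(r.1, q.2) :: P₁, ?_, ?_, ?_⟩
    · rw [← hSf, hf1]; simp [Multiset.cons_coe]
    · have : q.2 ::ₘ [] ::ₘ (↑(P₁.map Prod.snd) : Multiset (List α)) = [] ::ₘ T := by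
        rw [← hs1]; exact hs0
      rw [Multiset.cons_swap] at this
      have hT := (Multiset.cons_inj_right _).mp this
      rw [← hT]; simp [Multiset.cons_coe]
    · have hcost0 : (P₀.map fun p => LD p.1 p.2).sum
          = LD r.1 r.2 + (P₁.map fun p => LD p.1 p.2).sum := by
        have := (hperm0.map (fun p => LD p.1 p.2)).sum_eq
        simpa using this
      have htri := LD_triangle r.1 ([] : List α) q.2
      rw [hq1] at hcost
      rw [hr2] at hcost0
      simp only [List.map_cons, List.sum_cons]
      omega

lemma Tk_succ_le {X Y : Multiset (List α)} {k : ℕ}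
    (hX : Multiset.card X ≤ k) (hY : Multiset.card Y ≤ k) :
    Tk (k+1) X Y ≤ Tk k X Y := by
  obtain ⟨xs, ys, hx, hy, hn⟩ := Tk_mem k X Y
  apply Tk_le (n := Tk k X Y)
  refine ⟨[] :: xs, [] :: ys, ?_, ?_, ?_⟩
  · rw [← Multiset.cons_coe, hx, pad_succ X k hX]
  · rw [← Multiset.cons_coe, hy, pad_succ Y k hY]
  · simp [hn, LD_self]

lemma Tk_le_succ {X Y : Multiset (List α)} {k : ℕ}
    (hX : Multiset.card X ≤ k) (hY : Multiset.card Y ≤ k) :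
    Tk k X Y ≤ Tk (k+1) X Y := by
  obtain ⟨xs, ys, hx, hy, hn⟩ := Tk_mem (k+1) X Y
  have hlx : xs.length = k+1 := by
    have := congrArg Multiset.card hx
    rw [Multiset.coe_card, card_pad X (k+1) (by omega)] at this
    exact this
  have hly : ys.length = k+1 := by
    have := congrArg Multiset.card hy
    rw [Multiset.coe_card, card_pad Y (k+1) (by omega)] at this
    exact this
  set P := xs.zip ys with hP
  have hPf : P.map Prod.fst = xs := List.map_fst_zip (by omega)
  have hPs : P.map Prod.snd = ys := List.map_snd_zip (by omega)
  have hf : (↑(P.map Prod.fst) : Multiset (List α)) = [] ::ₘ pad X k := by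
    rw [hPf, hx, pad_succ X k hX]
  have hs : (↑(P.map Prod.snd) : Multiset (List α)) = [] ::ₘ pad Y k := by
    rw [hPs, hy, pad_succ Y k hY]
  obtain ⟨P', h1, h2, h3⟩ := reduce P _ _ hf hs
  have hmem : (P'.map fun p => LD p.1 p.2).sum ∈ SLDset k X Y :=
    ⟨P'.map Prod.fst, P'.map Prod.snd, h1, h2, (zip_sum_eq P').symm⟩
  have hPsum : (P.map fun p => LD p.1 p.2).sum = (List.zipWith LD xs ys).sum := by
    rw [← zip_sum_eq P, hPf, hPs]
  calc Tk k X Y ≤ _ := Tk_le hmem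
  _ ≤ (P.map fun p => LD p.1 p.2).sum := h3
  _ = Tk (k+1) X Y := by rw [hPsum, ← hn]

lemma Tk_stable {X Y : Multiset (List α)} {k K : ℕ}
    (hX : Multiset.card X ≤ k) (hY : Multiset.card Y ≤ k) (hk : k ≤ K) :
    Tk K X Y = Tk k X Y := by
  induction K, hk using Nat.le_induction with
  | base => rfl
  | succ K hK ih =>
    rw [← ih]
    exact le_antisymm (Tk_succ_le (hX.trans hK) (hY.trans hK))
      (Tk_le_succ (hX.trans hK) (hY.trans hK))

lemma Tk_triangle {X Y Z : Multiset (List α)} {K : ℕ}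
    (hX : Multiset.card X ≤ K) (hY : Multiset.card Y ≤ K) (hZ : Multiset.card Z ≤ K) :
    Tk K X Z ≤ Tk K X Y + Tk K Y Z := by
  obtain ⟨xs, ys, hx, hy, hn⟩ := Tk_mem K X Y
  obtain ⟨ys', zs, hy', hz, hm⟩ := Tk_mem K Y Z
  have hlxs : xs.length = K := by
    have := congrArg Multiset.card hx
    rwa [Multiset.coe_card, card_pad X K hX] at this
  have hlys : ys.length = K := by
    have := congrArg Multiset.card hy
    rwa [Multiset.coe_card, card_pad Y K hY] at this
  have hlys' : ys'.length = K := by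
    have := congrArg Multiset.card hy'
    rwa [Multiset.coe_card, card_pad Y K hY] at this
  have hlzs : zs.length = K := by
    have := congrArg Multiset.card hz
    rwa [Multiset.coe_card, card_pad Z K hZ] at this
  have hperm : ys'.Perm ys := Multiset.coe_eq_coe.mp (hy'.trans hy.symm)
  obtain ⟨zs', hp, hsum, hlen⟩ := align hperm zs (by omega)
  have hmem : (List.zipWith LD xs zs').sum ∈ SLDset K X Z :=
    ⟨xs, zs', hx, (Multiset.coe_eq_coe.mpr hp).trans hz, rfl⟩
  have htri := zip_triangle_sum xs ys zs' (by omega) (by omega)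
  have := Tk_le hmem
  omega

lemma Tk_comm (k : ℕ) (X Y : Multiset (List α)) : Tk k X Y = Tk k Y X := by
  unfold Tk
  congr 1
  ext n
  constructor
  · rintro ⟨xs, ys, hx, hy, hn⟩
    exact ⟨ys, xs, hy, hx, by rw [hn, List.zipWith_comm_of_comm LD_comm]⟩
  · rintro ⟨xs, ys, hx, hy, hn⟩
    exact ⟨ys, xs, hy, hx, by rw [hn, List.zipWith_comm_of_comm LD_comm]⟩

theorem SLD_isMetric (X Y Z : Multiset (List α)) :
    SLD X X = 0 ∧ SLD X Y = SLD Y X ∧ SLD X Z ≤ SLD X Y + SLD Y Z := by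
  refine ⟨?_, ?_, ?_⟩
  · have h : (0 : ℕ) ∈ SLDset (max (Multiset.card X) (Multiset.card X)) X X :=
      ⟨(pad X _).toList, (pad X _).toList, Multiset.coe_toList _, Multiset.coe_toList _,
        (zipWith_sum_self _).symm⟩
    exact Nat.le_zero.mp (Tk_le h)
  · rw [SLD_eq_Tk, SLD_eq_Tk, Tk_comm, Nat.max_comm]
  · set cX := Multiset.card X
    set cY := Multiset.card Y
    set cZ := Multiset.card Z
    set K := max (max cX cY) (max cY cZ) with hK
    have h1 : SLD X Z = Tk K X Z := by
      rw [SLD_eq_Tk, ← Tk_stable (X := X) (Y := Z) (k := max cX cZ) (K := K)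
        (le_max_left _ _) (le_max_right _ _) (by omega)]
    have h2 : SLD X Y = Tk K X Y := by
      rw [SLD_eq_Tk, ← Tk_stable (X := X) (Y := Y) (k := max cX cY) (K := K)
        (le_max_left _ _) (le_max_right _ _) (by omega)]
    have h3 : SLD Y Z = Tk K Y Z := by
      rw [SLD_eq_Tk, ← Tk_stable (X := Y) (Y := Z) (k := max cY cZ) (K := K)
        (le_max_left _ _) (le_max_right _ _) (by omega)]
    rw [h1, h2, h3]
    exact Tk_triangle (by omega) (by omega) (by omega)
end

section
/- If NLD(x,y) ≤ T for strings x, y and threshold T ∈ [0,1), and |x| > |y|, then LD(x,y) ≤ ⌊T·|y|/(1−T)⌋. -/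
variable {α : Type*} [Fintype α] [DecidableEq α]

theorem length_le_length_add_LD (x y : List α) :
    x.length ≤ y.length + LD x y := by
  unfold LD
  induction x generalizing y with
  | nil => simp
  | cons a xs ih =>
    induction y with
    | nil =>
      rw [levenshtein.eq_3]
      have := ih (y := [])
      have hdel : Levenshtein.defaultCost.delete a = 1 := rfl
      rw [hdel]
      simp only [List.length_nil, Nat.zero_add, List.length_cons] at *
      omega
    | cons b ys ihy =>
      rw [levenshtein.eq_4]
      have h1 := ih (y := b :: ys)
      have h2 := ihy
      have h3 := ih (y := ys)
      have hdel : Levenshtein.defaultCost.delete a = 1 := rfl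
      have hins : (Levenshtein.defaultCost (α := α)).insert b = 1 := rfl
      rw [hdel, hins]
      simp only [List.length_cons] at *
      omega

theorem LD_le_of_NLD_le' (x y : List α) (T : ℝ) (hT0 : 0 ≤ T) (hT1 : T < 1)
    (hlen : x.length > y.length) (h : NLD x y ≤ T) :
    (LD x y : ℤ) ≤ ⌊T * (y.length : ℝ) / (1 - T)⌋ := by
  have hlen' := length_le_length_add_LD x y
  set d : ℕ := LD x y with hd
  have hdpos : 0 < d := by
    rcases Nat.eq_zero_or_pos d with h0 | h0
    · exfalso; omega
    · exact h0
  have hm : (0:ℝ) < x.length + y.length + d := by positivity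
  rw [NLD, div_le_iff₀ hm] at h
  -- 2d ≤ T (m + n + d), m ≤ n + d
  have hcast : (x.length : ℝ) ≤ (y.length : ℝ) + d := by exact_mod_cast hlen'
  have key : (d : ℝ) * (1 - T) ≤ T * y.length := by nlinarith
  rw [Int.le_floor]
  push_cast
  rw [le_div_iff₀ (by linarith)]
  linarith
end
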